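/- (Theorem 1, Carleman estimate.) Let a, T̃ > 0 and α ∈ (0,1/2). There exist constants C > 0 and λ₀ ≥ 1, depending only on α, a and T̃, such that for every function w : ℝ × ℝ → ℝ which is C² on an open neighborhood of the closed rectangle [0,a] × [0,T̃] and satisfies w(0,t) = 0 and w_x(0,t) = 0 for all t ∈ [0,T̃], and for every λ ≥ λ₀, one has ∫_Ω (w_xx − 2 w_xt)² ψ_λ dx dt ≥ C ∫_Ω [λ (w_x² + w_t²) + λ³ w²] ψ_λ dx dt + C ∫₀ᵃ [λ w_x(x,0)² + λ³ w(x,0)²] e^{−2λx} dx − C e^{−2λαT̃} ∫₀ᵃ [λ w_x(x,T̃)² + λ³ w(x,T̃)²] dx. -/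

import Mathlib

open MeasureTheory Set

set_option maxHeartbeats 2000000

/-- Partial derivative in the first variable. -/
noncomputable def partialX (f : ℝ × ℝ → ℝ) : ℝ × ℝ → ℝ :=
  fun p => deriv (fun x => f (x, p.2)) p.1

/-- Partial derivative in the second variable. -/
noncomputable def partialT (f : ℝ × ℝ → ℝ) : ℝ × ℝ → ℝ :=
  fun p => deriv (fun t => f (p.1, t)) p.2

/-- The Carleman weight ψ_λ(x,t) = exp(−2λ(x + αt)). -/
noncomputable def carlemanWeight (α lam : ℝ) : ℝ × ℝ → ℝ :=
  fun p => Real.exp (-2 * lam * (p.1 + α * p.2))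


lemma expderiv (lam : ℝ) (x : ℝ) :
    HasDerivAt (fun x : ℝ => Real.exp (-2*lam*x)) (-2*lam * Real.exp (-2*lam*x)) x := by
  have h1 : HasDerivAt (fun x : ℝ => -2*lam*x) (-2*lam) x := by
    simpa using (hasDerivAt_id x).const_mul (-2*lam)
  have := h1.exp
  convert this using 1
  ring

lemma hardy1d {a lam : ℝ} (ha : 0 < a) (hlam : 0 < lam) {u u' : ℝ → ℝ}
    (hu : ∀ x ∈ Set.Icc (0:ℝ) a, HasDerivAt u (u' x) x)
    (hu' : ContinuousOn u' (Set.Icc 0 a)) (h0 : u 0 = 0) :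
    lam ^ 2 * ∫ x in Ioo (0:ℝ) a, (u x)^2 * Real.exp (-2*lam*x)
      ≤ ∫ x in Ioo (0:ℝ) a, (u' x)^2 * Real.exp (-2*lam*x) := by
  have hucont : ContinuousOn u (Set.Icc 0 a) :=
    fun x hx => ((hu x hx).continuousAt).continuousWithinAt
  set e : ℝ → ℝ := fun x => Real.exp (-2*lam*x) with he_def
  have hecont : Continuous e := by fun_prop
  have hepos : ∀ x, 0 < e x := fun x => Real.exp_pos _
  set F' : ℝ → ℝ := fun x => (2*u x*u' x - 2*lam*(u x)^2) * e x with hF'_def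
  have hF : ∀ x ∈ Set.uIcc (0:ℝ) a, HasDerivAt (fun y => (u y)^2 * e y) (F' x) x := by
    intro x hx
    rw [Set.uIcc_of_le ha.le] at hx
    have h1 : HasDerivAt (fun y => (u y)^2) (2 * u x * u' x) x := by
      simpa [pow_one, mul_assoc] using (hu x hx).fun_pow 2
    have := h1.fun_mul (expderiv lam x)
    refine this.congr_deriv ?_
    simp only [hF'_def, he_def]; ring
  have hF'cont : ContinuousOn F' (Set.Icc 0 a) := by
    simp only [hF'_def]; fun_prop
  have hFTC : ∫ x in (0:ℝ)..a, F' x = (u a)^2 * e a - (u 0)^2 * e 0 :=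
    intervalIntegral.integral_eq_sub_of_hasDerivAt hF
      (by
        apply ContinuousOn.intervalIntegrable
        rwa [Set.uIcc_of_le ha.le])
  have hInt1 : IntegrableOn (fun x => (u x)^2 * e x) (Ioo 0 a) := by
    apply ((hucont.pow 2).mul hecont.continuousOn).integrableOn_compact isCompact_Icc |>.mono_set
    exact Ioo_subset_Icc_self
  have hInt2 : IntegrableOn (fun x => (u' x)^2 * e x) (Ioo 0 a) := by
    apply ((hu'.pow 2).mul hecont.continuousOn).integrableOn_compact isCompact_Icc |>.mono_set
    exact Ioo_subset_Icc_self
  have hIntF' : IntegrableOn F' (Ioo 0 a) := by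
    apply hF'cont.integrableOn_compact isCompact_Icc |>.mono_set Ioo_subset_Icc_self
  have h1 : (0:ℝ) ≤ ∫ x in Ioo (0:ℝ) a, F' x := by
    have heq : ∫ x in Ioo (0:ℝ) a, F' x = (u a)^2 * e a - (u 0)^2 * e 0 := by
      rw [← hFTC, intervalIntegral.integral_of_le ha.le, integral_Ioc_eq_integral_Ioo]
    rw [heq, h0]
    have := hepos a
    nlinarith [sq_nonneg (u a)]
  have h2 : ∫ x in Ioo (0:ℝ) a, F' x
      ≤ ∫ x in Ioo (0:ℝ) a, (lam⁻¹ * ((u' x)^2 * e x) - lam * ((u x)^2 * e x)) := by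
    apply setIntegral_mono_on hIntF' _ measurableSet_Ioo
    · intro x _
      have hae : 0 < e x := hepos x
      have key : 2 * u x * u' x ≤ lam * (u x)^2 + lam⁻¹ * (u' x)^2 := by
        nlinarith [sq_nonneg (lam * u x - u' x), mul_pos hlam hlam,
          mul_inv_cancel₀ hlam.ne']
      calc F' x = (2*u x*u' x - 2*lam*(u x)^2) * e x := rfl
        _ ≤ ((lam * (u x)^2 + lam⁻¹ * (u' x)^2) - 2*lam*(u x)^2) * e x := by
            apply mul_le_mul_of_nonneg_right _ hae.le
            linarith
        _ = lam⁻¹ * ((u' x)^2 * e x) - lam * ((u x)^2 * e x) := by ring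
    · exact (hInt2.const_mul lam⁻¹).sub (hInt1.const_mul lam)
  rw [integral_sub (hInt2.const_mul lam⁻¹) (hInt1.const_mul lam),
    integral_const_mul, integral_const_mul] at h2
  have hIpos : (0:ℝ) ≤ ∫ x in Ioo (0:ℝ) a, (u x)^2 * e x :=
    setIntegral_nonneg measurableSet_Ioo (fun x _ => by positivity)
  have h3 : lam * ∫ x in Ioo (0:ℝ) a, (u x)^2 * e x
      ≤ lam⁻¹ * ∫ x in Ioo (0:ℝ) a, (u' x)^2 * e x := by linarith
  have h4 := mul_le_mul_of_nonneg_left h3 hlam.le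
  calc lam ^2 * ∫ x in Ioo (0:ℝ) a, (u x)^2 * e x
      = lam * (lam * ∫ x in Ioo (0:ℝ) a, (u x)^2 * e x) := by ring
    _ ≤ lam * (lam⁻¹ * ∫ x in Ioo (0:ℝ) a, (u' x)^2 * e x) := h4
    _ = ∫ x in Ioo (0:ℝ) a, (u' x)^2 * e x := by
        rw [← mul_assoc, mul_inv_cancel₀ hlam.ne', one_mul]


lemma rectInt {a T : ℝ} {f : ℝ×ℝ → ℝ}
    (hf : ContinuousOn f (Icc (0:ℝ) a ×ˢ Icc (0:ℝ) T)) :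
    IntegrableOn f (Ioo (0:ℝ) a ×ˢ Ioo (0:ℝ) T) :=
  (hf.integrableOn_compact (isCompact_Icc.prod isCompact_Icc)).mono_set
    (prod_mono Ioo_subset_Icc_self Ioo_subset_Icc_self)

lemma fub1 {a T : ℝ} {f : ℝ×ℝ → ℝ}
    (hf : IntegrableOn f (Ioo (0:ℝ) a ×ˢ Ioo (0:ℝ) T)) :
    ∫ p in Ioo (0:ℝ) a ×ˢ Ioo (0:ℝ) T, f p
      = ∫ x in Ioo (0:ℝ) a, ∫ t in Ioo (0:ℝ) T, f (x,t) := by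
  rw [MeasureTheory.Measure.volume_eq_prod] at hf ⊢
  exact setIntegral_prod f hf

lemma fub2 {a T : ℝ} {f : ℝ×ℝ → ℝ}
    (hf : IntegrableOn f (Ioo (0:ℝ) a ×ˢ Ioo (0:ℝ) T)) :
    ∫ p in Ioo (0:ℝ) a ×ˢ Ioo (0:ℝ) T, f p
      = ∫ t in Ioo (0:ℝ) T, ∫ x in Ioo (0:ℝ) a, f (x,t) := by
  rw [fub1 hf]
  apply integral_integral_swap
  rw [Measure.prod_restrict]
  rw [MeasureTheory.Measure.volume_eq_prod] at hf
  exact hf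

lemma innerInt1 {a T : ℝ} {f : ℝ×ℝ → ℝ}
    (hf : IntegrableOn f (Ioo (0:ℝ) a ×ˢ Ioo (0:ℝ) T)) :
    IntegrableOn (fun t => ∫ x in Ioo (0:ℝ) a, f (x,t)) (Ioo (0:ℝ) T) := by
  rw [MeasureTheory.Measure.volume_eq_prod] at hf
  have hf' : Integrable f ((volume.restrict (Ioo (0:ℝ) a)).prod (volume.restrict (Ioo (0:ℝ) T))) := by
    rw [Measure.prod_restrict]; exact hf
  exact hf'.swap.integral_prod_left

lemma innerInt2 {a T : ℝ} {f : ℝ×ℝ → ℝ}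
    (hf : IntegrableOn f (Ioo (0:ℝ) a ×ˢ Ioo (0:ℝ) T)) :
    IntegrableOn (fun x => ∫ t in Ioo (0:ℝ) T, f (x,t)) (Ioo (0:ℝ) a) := by
  rw [MeasureTheory.Measure.volume_eq_prod] at hf
  have hf' : Integrable f ((volume.restrict (Ioo (0:ℝ) a)).prod (volume.restrict (Ioo (0:ℝ) T))) := by
    rw [Measure.prod_restrict]; exact hf
  exact hf'.integral_prod_left

lemma expderiv' (c : ℝ) (b : ℝ) (x : ℝ) :
    HasDerivAt (fun x : ℝ => Real.exp (c*(x + b))) (c * Real.exp (c*(x+b))) x := by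
  have h1 : HasDerivAt (fun x : ℝ => c*(x+b)) c x := by
    simpa using ((hasDerivAt_id x).add_const b).const_mul c
  have := h1.exp
  convert this using 1
  ring

lemma transport {a T α lam : ℝ} (ha : 0 < a) (hT : 0 < T)
    (hα : 0 < α) (hα2 : α < 1/2) (hlam : 0 < lam)
    {U : Set (ℝ×ℝ)} (hU : IsOpen U) (hKU : Icc (0:ℝ) a ×ˢ Icc (0:ℝ) T ⊆ U)
    {v vx vt : ℝ×ℝ → ℝ}
    (hx : ∀ p ∈ U, HasDerivAt (fun s => v (s, p.2)) (vx p) p.1)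
    (ht : ∀ p ∈ U, HasDerivAt (fun s => v (p.1, s)) (vt p) p.2)
    (hvc : ContinuousOn v U) (hvxc : ContinuousOn vx U) (hvtc : ContinuousOn vt U)
    (hv0 : ∀ t ∈ Icc (0:ℝ) T, v (0, t) = 0) :
    (∫ x in Ioo (0:ℝ) a, (v (x,0))^2 * Real.exp (-2*lam*x))
      + (lam*(1-2*α)/2) * ∫ p in Ioo (0:ℝ) a ×ˢ Ioo (0:ℝ) T,
          (v p)^2 * Real.exp (-2*lam*(p.1+α*p.2))
    ≤ (∫ x in Ioo (0:ℝ) a, (v (x,T))^2 * Real.exp (-2*lam*(x+α*T)))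
      + (1/(2*lam*(1-2*α))) * ∫ p in Ioo (0:ℝ) a ×ˢ Ioo (0:ℝ) T,
          (vx p - 2*vt p)^2 * Real.exp (-2*lam*(p.1+α*p.2)) := by
  have hβ : 0 < 1 - 2*α := by linarith
  set β := 1 - 2*α with hβdef
  set K : Set (ℝ×ℝ) := Icc (0:ℝ) a ×ˢ Icc (0:ℝ) T with hKdef
  have hKcpt : IsCompact K := isCompact_Icc.prod isCompact_Icc
  have hΩK : Ioo (0:ℝ) a ×ˢ Ioo (0:ℝ) T ⊆ K :=
    prod_mono Ioo_subset_Icc_self Ioo_subset_Icc_self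
  set ψ : ℝ×ℝ → ℝ := fun p => Real.exp (-2*lam*(p.1+α*p.2)) with hψdef
  have hψc : Continuous ψ := by fun_prop
  have hψpos : ∀ p, 0 < ψ p := fun p => Real.exp_pos _
  -- continuity on K
  have hvcK : ContinuousOn v K := hvc.mono hKU
  have hvxcK : ContinuousOn vx K := hvxc.mono hKU
  have hvtcK : ContinuousOn vt K := hvtc.mono hKU
  set F : ℝ×ℝ → ℝ := fun p => (v p)^2 * ψ p with hFdef
  set Gx : ℝ×ℝ → ℝ := fun p => (2*v p*vx p - 2*lam*(v p)^2) * ψ p with hGxdef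
  set Gt : ℝ×ℝ → ℝ := fun p => (2*v p*vt p - 2*lam*α*(v p)^2) * ψ p with hGtdef
  set H : ℝ×ℝ → ℝ := fun p => (v p*(vx p - 2*vt p)) * ψ p with hHdef
  have hGxc : ContinuousOn Gx K := by
    apply ContinuousOn.mul _ hψc.continuousOn
    exact ((continuousOn_const.mul hvcK).mul hvxcK).sub
      (continuousOn_const.mul (hvcK.pow 2))
  have hGtc : ContinuousOn Gt K := by
    apply ContinuousOn.mul _ hψc.continuousOn
    exact ((continuousOn_const.mul hvcK).mul hvtcK).sub
      (continuousOn_const.mul (hvcK.pow 2))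
  have hHc : ContinuousOn H K := by
    apply ContinuousOn.mul _ hψc.continuousOn
    exact hvcK.mul (hvxc.mono hKU |>.sub (continuousOn_const.mul hvtcK))
  have hv2c : ContinuousOn (fun p => (v p)^2 * ψ p) K := (hvcK.pow 2).mul hψc.continuousOn
  have hPc : ContinuousOn (fun p => (vx p - 2*vt p)^2 * ψ p) K :=
    (((hvxcK.sub (continuousOn_const.mul hvtcK)).pow 2)).mul hψc.continuousOn
  -- integrability on Ω
  have rect : ∀ {f : ℝ×ℝ → ℝ}, ContinuousOn f K →
      IntegrableOn f (Ioo (0:ℝ) a ×ˢ Ioo (0:ℝ) T) := fun hf =>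
    (hf.integrableOn_compact hKcpt).mono_set hΩK
  have hIGx := rect hGxc
  have hIGt := rect hGtc
  have hIH := rect hHc
  have hIv2 := rect hv2c
  have hIP := rect hPc
  -- membership
  have hmem : ∀ x ∈ Icc (0:ℝ) a, ∀ t ∈ Icc (0:ℝ) T, ((x,t) : ℝ×ℝ) ∈ U :=
    fun x hxx t htt => hKU (mk_mem_prod hxx htt)
  -- slice FTC in x
  have hAx : ∀ t ∈ Icc (0:ℝ) T, ∫ x in Ioo (0:ℝ) a, Gx (x,t) = F (a,t) - F (0,t) := by
    intro t htt
    have hder : ∀ x ∈ Set.uIcc (0:ℝ) a, HasDerivAt (fun y => F (y,t)) (Gx (x,t)) x := by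
      intro x hxx
      rw [Set.uIcc_of_le ha.le] at hxx
      have hp : ((x,t) : ℝ×ℝ) ∈ U := hmem x hxx t htt
      have h1 : HasDerivAt (fun y => (v (y,t))^2) (2 * v (x,t) * vx (x,t)) x := by
        simpa [pow_one, mul_assoc] using (hx _ hp).fun_pow 2
      have h2 : HasDerivAt (fun y : ℝ => Real.exp (-2*lam*(y + α*t)))
          (-2*lam * Real.exp (-2*lam*(x + α*t))) x := by
        simpa using expderiv' (-2*lam) (α*t) x
      have := h1.fun_mul h2
      refine this.congr_deriv ?_
      simp only [hGxdef, hFdef, hψdef]; ring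
    have hcont : ContinuousOn (fun x => Gx (x,t)) (Set.uIcc (0:ℝ) a) := by
      rw [Set.uIcc_of_le ha.le]
      exact hGxc.comp (Continuous.continuousOn (by fun_prop))
        (fun x hxx => mk_mem_prod hxx htt)
    have := intervalIntegral.integral_eq_sub_of_hasDerivAt hder
      (hcont.intervalIntegrable)
    rw [intervalIntegral.integral_of_le ha.le, integral_Ioc_eq_integral_Ioo] at this
    exact this
  -- slice FTC in t
  have hAt : ∀ x ∈ Icc (0:ℝ) a, ∫ t in Ioo (0:ℝ) T, Gt (x,t) = F (x,T) - F (x,0) := by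
    intro x hxx
    have hder : ∀ t ∈ Set.uIcc (0:ℝ) T, HasDerivAt (fun s => F (x,s)) (Gt (x,t)) t := by
      intro t htt
      rw [Set.uIcc_of_le hT.le] at htt
      have hp : ((x,t) : ℝ×ℝ) ∈ U := hmem x hxx t htt
      have h1 : HasDerivAt (fun s => (v (x,s))^2) (2 * v (x,t) * vt (x,t)) t := by
        simpa [pow_one, mul_assoc] using (ht _ hp).fun_pow 2
      have h2 : HasDerivAt (fun s : ℝ => Real.exp (-2*lam*(x + α*s)))
          (-2*lam*α * Real.exp (-2*lam*(x + α*t))) t := by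
        have h3 : HasDerivAt (fun s : ℝ => -2*lam*(x + α*s)) (-2*lam*α) t := by
          have : HasDerivAt (fun s : ℝ => x + α*s) α t := by
            simpa using ((hasDerivAt_id t).const_mul α).const_add x
          simpa using this.const_mul (-2*lam)
        have := h3.exp
        convert this using 1
        ring
      have := h1.fun_mul h2
      refine this.congr_deriv ?_
      simp only [hGtdef, hFdef, hψdef]; ring
    have hcont : ContinuousOn (fun t => Gt (x,t)) (Set.uIcc (0:ℝ) T) := by
      rw [Set.uIcc_of_le hT.le]
      exact hGtc.comp (Continuous.continuousOn (by fun_prop))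
        (fun t htt => mk_mem_prod hxx htt)
    have := intervalIntegral.integral_eq_sub_of_hasDerivAt hder
      (hcont.intervalIntegrable)
    rw [intervalIntegral.integral_of_le hT.le, integral_Ioc_eq_integral_Ioo] at this
    exact this
  -- 2D integral of Gx is nonneg
  have hGxnn : 0 ≤ ∫ p in Ioo (0:ℝ) a ×ˢ Ioo (0:ℝ) T, Gx p := by
    rw [fub2 hIGx]
    apply setIntegral_nonneg measurableSet_Ioo
    intro t htt
    rw [hAx t (Ioo_subset_Icc_self htt)]
    have h0 : F (0,t) = 0 := by
      simp only [hFdef, hv0 t (Ioo_subset_Icc_self htt)]; ring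
    rw [h0, sub_zero]
    have := hψpos (a,t)
    simp only [hFdef]
    positivity
  -- 2D integral of Gt
  have hGtval : ∫ p in Ioo (0:ℝ) a ×ˢ Ioo (0:ℝ) T, Gt p
      = (∫ x in Ioo (0:ℝ) a, F (x,T)) - ∫ x in Ioo (0:ℝ) a, F (x,0) := by
    rw [fub1 hIGt]
    rw [← integral_sub]
    · apply setIntegral_congr_fun measurableSet_Ioo
      intro x hxx
      exact hAt x (Ioo_subset_Icc_self hxx)
    · apply ((hvcK.comp (Continuous.continuousOn (by fun_prop))
        (fun x (hxx : x ∈ Icc (0:ℝ) a) => mk_mem_prod hxx (right_mem_Icc.2 hT.le))).pow 2).mul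
        (hψc.comp (by fun_prop : Continuous fun x : ℝ => ((x,T) : ℝ×ℝ))).continuousOn
        |>.integrableOn_compact isCompact_Icc |>.mono_set Ioo_subset_Icc_self
    · apply ((hvcK.comp (Continuous.continuousOn (by fun_prop))
        (fun x (hxx : x ∈ Icc (0:ℝ) a) => mk_mem_prod hxx (left_mem_Icc.2 hT.le))).pow 2).mul
        (hψc.comp (by fun_prop : Continuous fun x : ℝ => ((x,(0:ℝ)) : ℝ×ℝ))).continuousOn
        |>.integrableOn_compact isCompact_Icc |>.mono_set Ioo_subset_Icc_self
  -- pointwise identity: (1/2) Gx - Gt = H - lam*β*v^2*ψ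
  have hptid : ∀ p : ℝ×ℝ, (1/2) * Gx p - Gt p = H p - lam*β*((v p)^2 * ψ p) := by
    intro p
    simp only [hGxdef, hGtdef, hHdef, hβdef]
    ring
  -- integral identity
  have hintid : (1/2) * (∫ p in Ioo (0:ℝ) a ×ˢ Ioo (0:ℝ) T, Gx p)
      - (∫ p in Ioo (0:ℝ) a ×ˢ Ioo (0:ℝ) T, Gt p)
      = (∫ p in Ioo (0:ℝ) a ×ˢ Ioo (0:ℝ) T, H p)
        - lam*β*(∫ p in Ioo (0:ℝ) a ×ˢ Ioo (0:ℝ) T, (v p)^2 * ψ p) := by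
    rw [← integral_const_mul, ← integral_const_mul, ← integral_sub (hIGx.const_mul _) hIGt,
      ← integral_sub hIH (hIv2.const_mul _)]
    apply setIntegral_congr_fun (measurableSet_Ioo.prod measurableSet_Ioo)
    intro p _
    exact hptid p
  -- pointwise AM-GM for H
  have hHbound : ∫ p in Ioo (0:ℝ) a ×ˢ Ioo (0:ℝ) T, H p
      ≤ (lam*β/2) * (∫ p in Ioo (0:ℝ) a ×ˢ Ioo (0:ℝ) T, (v p)^2 * ψ p)
        + (1/(2*lam*β)) * (∫ p in Ioo (0:ℝ) a ×ˢ Ioo (0:ℝ) T, (vx p - 2*vt p)^2 * ψ p) := by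
    rw [← integral_const_mul, ← integral_const_mul, ← integral_add (hIv2.const_mul _) (hIP.const_mul _)]
    apply setIntegral_mono_on hIH ((hIv2.const_mul _).add (hIP.const_mul _))
      (measurableSet_Ioo.prod measurableSet_Ioo)
    intro p _
    have hψp := (hψpos p).le
    have hlb : 0 < lam * β := mul_pos hlam hβ
    have key : v p * (vx p - 2*vt p) ≤ (lam*β/2) * (v p)^2 + (1/(2*lam*β)) * (vx p - 2*vt p)^2 := by
      rw [← sub_nonneg]
      have heq : (lam*β/2) * (v p)^2 + (1/(2*lam*β)) * (vx p - 2*vt p)^2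
          - v p * (vx p - 2*vt p) = (lam*β*v p - (vx p - 2*vt p))^2 / (2*lam*β) := by
        field_simp
        ring
      rw [heq]
      positivity
    calc H p = (v p * (vx p - 2*vt p)) * ψ p := rfl
      _ ≤ ((lam*β/2) * (v p)^2 + (1/(2*lam*β)) * (vx p - 2*vt p)^2) * ψ p :=
          mul_le_mul_of_nonneg_right key hψp
      _ = (lam*β/2) * ((v p)^2 * ψ p) + (1/(2*lam*β)) * ((vx p - 2*vt p)^2 * ψ p) := by ring
  -- conclude
  set Jx := ∫ p in Ioo (0:ℝ) a ×ˢ Ioo (0:ℝ) T, Gx p with hJx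
  set Jt := ∫ p in Ioo (0:ℝ) a ×ˢ Ioo (0:ℝ) T, Gt p with hJt
  set JH := ∫ p in Ioo (0:ℝ) a ×ˢ Ioo (0:ℝ) T, H p with hJH
  set Jv := ∫ p in Ioo (0:ℝ) a ×ˢ Ioo (0:ℝ) T, (v p)^2 * ψ p with hJv
  set JP := ∫ p in Ioo (0:ℝ) a ×ˢ Ioo (0:ℝ) T, (vx p - 2*vt p)^2 * ψ p with hJP
  have hb0 : ∫ x in Ioo (0:ℝ) a, F (x,0) = ∫ x in Ioo (0:ℝ) a, (v (x,0))^2 * Real.exp (-2*lam*x) := by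
    apply setIntegral_congr_fun measurableSet_Ioo
    intro x _
    simp only [hFdef, hψdef]
    norm_num
  have hbT : ∫ x in Ioo (0:ℝ) a, F (x,T) = ∫ x in Ioo (0:ℝ) a, (v (x,T))^2 * Real.exp (-2*lam*(x+α*T)) := by
    rfl
  rw [← hb0, ← hbT]
  set B0 := ∫ x in Ioo (0:ℝ) a, F (x,0) with hB0
  set BT := ∫ x in Ioo (0:ℝ) a, F (x,T) with hBT
  linarith [hintid, hGxnn, hGtval, hHbound]

lemma hardy2d (ha : 0 < a) (hT : 0 < T) (hlam : 0 < lam)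
    {v vx : ℝ×ℝ → ℝ}
    (hx : ∀ p ∈ Icc (0:ℝ) a ×ˢ Icc (0:ℝ) T, HasDerivAt (fun s => v (s, p.2)) (vx p) p.1)
    (hvc : ContinuousOn v (Icc (0:ℝ) a ×ˢ Icc (0:ℝ) T))
    (hvxc : ContinuousOn vx (Icc (0:ℝ) a ×ˢ Icc (0:ℝ) T))
    (hv0 : ∀ t ∈ Icc (0:ℝ) T, v (0, t) = 0) :
    lam^2 * ∫ p in Ioo (0:ℝ) a ×ˢ Ioo (0:ℝ) T, (v p)^2 * Real.exp (-2*lam*(p.1+α*p.2))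
      ≤ ∫ p in Ioo (0:ℝ) a ×ˢ Ioo (0:ℝ) T, (vx p)^2 * Real.exp (-2*lam*(p.1+α*p.2)) := by
  set K : Set (ℝ×ℝ) := Icc (0:ℝ) a ×ˢ Icc (0:ℝ) T with hKdef
  have hKcpt : IsCompact K := isCompact_Icc.prod isCompact_Icc
  have hΩK : Ioo (0:ℝ) a ×ˢ Ioo (0:ℝ) T ⊆ K :=
    prod_mono Ioo_subset_Icc_self Ioo_subset_Icc_self
  set ψ : ℝ×ℝ → ℝ := fun p => Real.exp (-2*lam*(p.1+α*p.2)) with hψdef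
  have hψc : Continuous ψ := by fun_prop
  have hIv2 : IntegrableOn (fun p => (v p)^2 * ψ p) (Ioo (0:ℝ) a ×ˢ Ioo (0:ℝ) T) :=
    (((hvc.pow 2).mul hψc.continuousOn).integrableOn_compact hKcpt).mono_set hΩK
  have hIvx2 : IntegrableOn (fun p => (vx p)^2 * ψ p) (Ioo (0:ℝ) a ×ˢ Ioo (0:ℝ) T) :=
    (((hvxc.pow 2).mul hψc.continuousOn).integrableOn_compact hKcpt).mono_set hΩK
  rw [← integral_const_mul, fub2 (hIv2.const_mul _), fub2 hIvx2]
  apply setIntegral_mono_on _ (innerInt1 hIvx2) measurableSet_Ioo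
  · intro t htt
    have httI : t ∈ Icc (0:ℝ) T := Ioo_subset_Icc_self htt
    have hsplit : ∀ x : ℝ, ψ (x,t) = Real.exp (-2*lam*x) * Real.exp (-2*lam*(α*t)) := by
      intro x
      rw [hψdef, ← Real.exp_add]
      ring_nf
    have h1 : ∫ x in Ioo (0:ℝ) a, lam^2 * ((v (x,t))^2 * ψ (x,t))
        = Real.exp (-2*lam*(α*t)) * (lam^2 * ∫ x in Ioo (0:ℝ) a, (v (x,t))^2 * Real.exp (-2*lam*x)) := by
      rw [← integral_const_mul, ← integral_const_mul]
      apply setIntegral_congr_fun measurableSet_Ioo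
      intro x _
      simp only [hsplit]; ring
    have h2 : ∫ x in Ioo (0:ℝ) a, (vx (x,t))^2 * ψ (x,t)
        = Real.exp (-2*lam*(α*t)) * ∫ x in Ioo (0:ℝ) a, (vx (x,t))^2 * Real.exp (-2*lam*x) := by
      rw [← integral_const_mul]
      apply setIntegral_congr_fun measurableSet_Ioo
      intro x _
      simp only [hsplit]; ring
    rw [h1, h2]
    apply mul_le_mul_of_nonneg_left _ (Real.exp_pos _).le
    apply hardy1d ha hlam
    · intro x hxx
      exact hx (x,t) (mk_mem_prod hxx httI)
    · exact hvxc.comp ((continuous_id.prodMk continuous_const).continuousOn)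
        (fun x hxx => mk_mem_prod hxx httI)
    · exact hv0 t httI
  · exact innerInt1 (hIv2.const_mul _)

lemma sliceX {F : ℝ×ℝ → ℝ} {L : (ℝ×ℝ) →L[ℝ] ℝ} {p : ℝ×ℝ} (h : HasFDerivAt F L p) :
    HasDerivAt (fun x => F (x, p.2)) (L (1,0)) p.1 := by
  have h2 : HasDerivAt (fun x : ℝ => ((x, p.2) : ℝ×ℝ)) ((1:ℝ),(0:ℝ)) p.1 :=
    (hasDerivAt_id p.1).prodMk (hasDerivAt_const p.1 p.2)
  exact h.comp_hasDerivAt p.1 h2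

lemma sliceT {F : ℝ×ℝ → ℝ} {L : (ℝ×ℝ) →L[ℝ] ℝ} {p : ℝ×ℝ} (h : HasFDerivAt F L p) :
    HasDerivAt (fun t => F (p.1, t)) (L (0,1)) p.2 := by
  have h2 : HasDerivAt (fun t : ℝ => ((p.1, t) : ℝ×ℝ)) ((0:ℝ),(1:ℝ)) p.2 :=
    (hasDerivAt_const p.2 p.1).prodMk (hasDerivAt_id p.2)
  exact h.comp_hasDerivAt p.2 h2

theorem carleman_estimate (a T : ℝ) (ha : 0 < a) (hT : 0 < T)
    (α : ℝ) (hα : α ∈ Set.Ioo (0 : ℝ) (1 / 2)) :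
    ∃ C : ℝ, 0 < C ∧ ∃ lam₀ : ℝ, 1 ≤ lam₀ ∧
      ∀ w : ℝ × ℝ → ℝ,
        (∃ U : Set (ℝ × ℝ), IsOpen U ∧ Icc (0 : ℝ) a ×ˢ Icc (0 : ℝ) T ⊆ U ∧
          ContDiffOn ℝ 2 w U) →
        (∀ t ∈ Icc (0 : ℝ) T, w (0, t) = 0 ∧ partialX w (0, t) = 0) →
        ∀ lam : ℝ, lam₀ ≤ lam →
          (∫ p in Ioo (0 : ℝ) a ×ˢ Ioo (0 : ℝ) T,
              (partialX (partialX w) p - 2 * partialT (partialX w) p) ^ 2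
                * carlemanWeight α lam p)
          ≥ C * (∫ p in Ioo (0 : ℝ) a ×ˢ Ioo (0 : ℝ) T,
                (lam * ((partialX w p) ^ 2 + (partialT w p) ^ 2) + lam ^ 3 * (w p) ^ 2)
                  * carlemanWeight α lam p)
            + C * (∫ x in Ioo (0 : ℝ) a,
                (lam * (partialX w (x, 0)) ^ 2 + lam ^ 3 * (w (x, 0)) ^ 2)
                  * Real.exp (-2 * lam * x))
            - C * Real.exp (-2 * lam * α * T) * (∫ x in Ioo (0 : ℝ) a,
                (lam * (partialX w (x, T)) ^ 2 + lam ^ 3 * (w (x, T)) ^ 2)) := by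
  obtain ⟨hα1, hα2⟩ := hα
  have hβ : 0 < 1 - 2*α := by linarith
  set β : ℝ := 1 - 2*α with hβdef
  refine ⟨β/(1+β), by positivity, max 1 (5/β), le_max_left _ _, ?_⟩
  intro w hreg hbc lam hlam
  obtain ⟨U, hUo, hKU, hw2⟩ := hreg
  set C : ℝ := β/(1+β) with hCdef
  have hC0 : 0 < C := by positivity
  have hlam1 : (1:ℝ) ≤ lam := le_trans (le_max_left _ _) hlam
  have hlam0 : (0:ℝ) < lam := lt_of_lt_of_le one_pos hlam1
  have hl5 : 5 ≤ lam * β := by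
    have h5 : 5/β ≤ lam := le_trans (le_max_right _ _) hlam
    rw [div_le_iff₀ hβ] at h5
    linarith
  have hlne : lam ≠ 0 := hlam0.ne'
  have hβne : β ≠ 0 := hβ.ne'
  -- sets
  have hKcpt : IsCompact (Icc (0:ℝ) a ×ˢ Icc (0:ℝ) T) := isCompact_Icc.prod isCompact_Icc
  have hΩK : Ioo (0:ℝ) a ×ˢ Ioo (0:ℝ) T ⊆ Icc (0:ℝ) a ×ˢ Icc (0:ℝ) T :=
    prod_mono Ioo_subset_Icc_self Ioo_subset_Icc_self
  have hΩU : Ioo (0:ℝ) a ×ˢ Ioo (0:ℝ) T ⊆ U := fun p hp => hKU (hΩK hp)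
  have hΩmeas : MeasurableSet (Ioo (0:ℝ) a ×ˢ Ioo (0:ℝ) T) :=
    measurableSet_Ioo.prod measurableSet_Ioo
  -- derivatives of w
  have hwd : ∀ p ∈ U, HasFDerivAt w (fderiv ℝ w p) p := fun p hp =>
    ((hw2.differentiableOn (by norm_num)) p hp).differentiableAt (hUo.mem_nhds hp)
      |>.hasFDerivAt
  have h1C : ContDiffOn ℝ 1 (fderiv ℝ w) U := hw2.fderiv_of_isOpen hUo (by norm_num)
  have hf1d : ∀ p ∈ U, HasFDerivAt (fderiv ℝ w) (fderiv ℝ (fderiv ℝ w) p) p := fun p hp =>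
    ((h1C.differentiableOn one_ne_zero) p hp).differentiableAt (hUo.mem_nhds hp) |>.hasFDerivAt
  set g : ℝ×ℝ → ℝ := fun p => fderiv ℝ w p (1,0) with hgdef
  set wt : ℝ×ℝ → ℝ := fun p => fderiv ℝ w p (0,1) with hwtdef
  have hgC1 : ContDiffOn ℝ 1 g U := h1C.clm_apply contDiffOn_const
  have hwtC1 : ContDiffOn ℝ 1 wt U := h1C.clm_apply contDiffOn_const
  have hgd : ∀ p ∈ U, HasFDerivAt g (fderiv ℝ g p) p := fun p hp =>
    ((hgC1.differentiableOn one_ne_zero) p hp).differentiableAt (hUo.mem_nhds hp) |>.hasFDerivAt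
  have hwtd : ∀ p ∈ U, HasFDerivAt wt (fderiv ℝ wt p) p := fun p hp =>
    ((hwtC1.differentiableOn one_ne_zero) p hp).differentiableAt (hUo.mem_nhds hp) |>.hasFDerivAt
  set gx : ℝ×ℝ → ℝ := fun p => fderiv ℝ g p (1,0) with hgxdef
  set gt : ℝ×ℝ → ℝ := fun p => fderiv ℝ g p (0,1) with hgtdef
  -- continuity
  have hwc : ContinuousOn w U := hw2.continuousOn
  have hgc : ContinuousOn g U := hgC1.continuousOn
  have hwtc : ContinuousOn wt U := hwtC1.continuousOn
  have hgfc : ContDiffOn ℝ 0 (fderiv ℝ g) U := hgC1.fderiv_of_isOpen hUo (by norm_num)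
  have hgxc : ContinuousOn gx U := (hgfc.clm_apply contDiffOn_const).continuousOn
  have hgtc : ContinuousOn gt U := (hgfc.clm_apply contDiffOn_const).continuousOn
  -- Schwarz symmetry: ∂x wt = gt on U
  have hschwarz : ∀ p ∈ U, fderiv ℝ wt p ((1:ℝ),(0:ℝ)) = gt p := by
    intro p hp
    have hev : ∀ᶠ y in nhds p, HasFDerivAt w (fderiv ℝ w y) y := by
      filter_upwards [hUo.mem_nhds hp] with y hy using hwd y hy
    have hsym := second_derivative_symmetric_of_eventually hev (hf1d p hp)
    have hwt' : HasFDerivAt wt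
        ((ContinuousLinearMap.apply ℝ ℝ ((0:ℝ),(1:ℝ))).comp (fderiv ℝ (fderiv ℝ w) p)) p :=
      (ContinuousLinearMap.apply ℝ ℝ ((0:ℝ),(1:ℝ))).hasFDerivAt.comp p (hf1d p hp)
    have hg' : HasFDerivAt g
        ((ContinuousLinearMap.apply ℝ ℝ ((1:ℝ),(0:ℝ))).comp (fderiv ℝ (fderiv ℝ w) p)) p :=
      (ContinuousLinearMap.apply ℝ ℝ ((1:ℝ),(0:ℝ))).hasFDerivAt.comp p (hf1d p hp)
    have e1 : fderiv ℝ wt p = (ContinuousLinearMap.apply ℝ ℝ ((0:ℝ),(1:ℝ))).comp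
        (fderiv ℝ (fderiv ℝ w) p) := hwt'.fderiv
    have e2 : fderiv ℝ g p = (ContinuousLinearMap.apply ℝ ℝ ((1:ℝ),(0:ℝ))).comp
        (fderiv ℝ (fderiv ℝ w) p) := hg'.fderiv
    rw [hgtdef]
    simp only [e1, e2, ContinuousLinearMap.coe_comp', Function.comp_apply,
      ContinuousLinearMap.apply_apply]
    exact hsym _ _
  -- slice derivative packages
  have hx_w : ∀ p ∈ U, HasDerivAt (fun s => w (s, p.2)) (g p) p.1 :=
    fun p hp => sliceX (hwd p hp)
  have ht_w : ∀ p ∈ U, HasDerivAt (fun s => w (p.1, s)) (wt p) p.2 :=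
    fun p hp => sliceT (hwd p hp)
  have hx_g : ∀ p ∈ U, HasDerivAt (fun s => g (s, p.2)) (gx p) p.1 :=
    fun p hp => sliceX (hgd p hp)
  have ht_g : ∀ p ∈ U, HasDerivAt (fun s => g (p.1, s)) (gt p) p.2 :=
    fun p hp => sliceT (hgd p hp)
  have hx_wt : ∀ p ∈ U, HasDerivAt (fun s => wt (s, p.2)) (gt p) p.1 := by
    intro p hp
    have := sliceX (hwtd p hp)
    rwa [hschwarz p hp] at this
  have hx_h : ∀ p ∈ U, HasDerivAt (fun s => g (s, p.2) - 2 * wt (s, p.2))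
      (gx p - 2 * gt p) p.1 :=
    fun p hp => (hx_g p hp).sub ((hx_wt p hp).const_mul 2)
  -- partialX/partialT identifications
  have hpx : ∀ p ∈ U, partialX w p = g p := fun p hp => (sliceX (hwd p hp)).deriv
  have hpt : ∀ p ∈ U, partialT w p = wt p := fun p hp => (sliceT (hwd p hp)).deriv
  have hslice_evx : ∀ p ∈ U, (fun x => partialX w (x, p.2)) =ᶠ[nhds p.1] (fun x => g (x, p.2)) := by
    intro p hp
    have hopen : IsOpen {x : ℝ | ((x, p.2) : ℝ×ℝ) ∈ U} :=
      hUo.preimage (continuous_id.prodMk continuous_const)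
    filter_upwards [hopen.mem_nhds (by simpa using hp)] with x hx
    exact hpx (x, p.2) hx
  have hpxx : ∀ p ∈ U, partialX (partialX w) p = gx p := by
    intro p hp
    have h1 : partialX (partialX w) p = deriv (fun x => partialX w (x, p.2)) p.1 := rfl
    rw [h1, Filter.EventuallyEq.deriv_eq (hslice_evx p hp)]
    exact (hx_g p hp).deriv
  have hptx : ∀ p ∈ U, partialT (partialX w) p = gt p := by
    intro p hp
    have hopen : IsOpen {t : ℝ | ((p.1, t) : ℝ×ℝ) ∈ U} :=
      hUo.preimage (continuous_const.prodMk continuous_id)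
    have hev : (fun t => partialX w (p.1, t)) =ᶠ[nhds p.2] (fun t => g (p.1, t)) := by
      filter_upwards [hopen.mem_nhds (by simpa using hp)] with t htt
      exact hpx (p.1, t) htt
    have h1 : partialT (partialX w) p = deriv (fun t => partialX w (p.1, t)) p.2 := rfl
    rw [h1, Filter.EventuallyEq.deriv_eq hev]
    exact (ht_g p hp).deriv
  -- boundary conditions
  have hw0 : ∀ t ∈ Icc (0:ℝ) T, w (0, t) = 0 := fun t ht' => (hbc t ht').1
  have hg0 : ∀ t ∈ Icc (0:ℝ) T, g (0, t) = 0 := by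
    intro t ht'
    have hp : ((0:ℝ), t) ∈ U := hKU (mk_mem_prod (left_mem_Icc.2 ha.le) ht')
    rw [← hpx _ hp]
    exact (hbc t ht').2
  have hwt0 : ∀ t ∈ Icc (0:ℝ) T, wt (0, t) = 0 := by
    intro t ht'
    have hp : ((0:ℝ), t) ∈ U := hKU (mk_mem_prod (left_mem_Icc.2 ha.le) ht')
    have hd : HasDerivAt (fun s => w (0, s)) (wt (0, t)) t := ht_w _ hp
    have h2 : HasDerivWithinAt (fun _ : ℝ => (0:ℝ)) (wt (0,t)) (Icc 0 T) t :=
      hd.hasDerivWithinAt.congr (fun y hy => (hw0 y hy).symm) ((hw0 t ht').symm)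
    have h3 : HasDerivWithinAt (fun _ : ℝ => (0:ℝ)) 0 (Icc 0 T) t :=
      hasDerivWithinAt_const t _ 0
    have hu := (uniqueDiffOn_Icc hT) t ht'
    have h4 := hu.eq h2.hasFDerivWithinAt h3.hasFDerivWithinAt
    have h5 := congrArg (fun (L : ℝ →L[ℝ] ℝ) => L 1) h4
    simpa using h5
  have hh0 : ∀ t ∈ Icc (0:ℝ) T, g (0, t) - 2 * wt (0, t) = 0 := by
    intro t ht'
    rw [hg0 t ht', hwt0 t ht']
    ring
  -- continuity on K
  have hKsub : ∀ {u : ℝ×ℝ → ℝ}, ContinuousOn u U → ContinuousOn u (Icc (0:ℝ) a ×ˢ Icc (0:ℝ) T) :=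
    fun hu => hu.mono hKU
  have rect : ∀ {f : ℝ×ℝ → ℝ}, ContinuousOn f (Icc (0:ℝ) a ×ˢ Icc (0:ℝ) T) →
      IntegrableOn f (Ioo (0:ℝ) a ×ˢ Ioo (0:ℝ) T) := fun hf =>
    (hf.integrableOn_compact hKcpt).mono_set hΩK
  have hψcont : Continuous (fun p : ℝ×ℝ => Real.exp (-2*lam*(p.1+α*p.2))) := by fun_prop
  have hψcont1 : Continuous (fun x : ℝ => Real.exp (-2*lam*x)) := by fun_prop
  have hIg : IntegrableOn (fun p => (g p)^2 * Real.exp (-2*lam*(p.1+α*p.2)))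
      (Ioo (0:ℝ) a ×ˢ Ioo (0:ℝ) T) :=
    rect (((hKsub hgc).pow 2).mul hψcont.continuousOn)
  have hIwt : IntegrableOn (fun p => (wt p)^2 * Real.exp (-2*lam*(p.1+α*p.2)))
      (Ioo (0:ℝ) a ×ˢ Ioo (0:ℝ) T) :=
    rect (((hKsub hwtc).pow 2).mul hψcont.continuousOn)
  have hIw : IntegrableOn (fun p => (w p)^2 * Real.exp (-2*lam*(p.1+α*p.2)))
      (Ioo (0:ℝ) a ×ˢ Ioo (0:ℝ) T) :=
    rect (((hKsub hwc).pow 2).mul hψcont.continuousOn)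
  have hIh : IntegrableOn (fun p => (g p - 2*wt p)^2 * Real.exp (-2*lam*(p.1+α*p.2)))
      (Ioo (0:ℝ) a ×ˢ Ioo (0:ℝ) T) :=
    rect ((((hKsub hgc).sub (continuousOn_const.mul (hKsub hwtc))).pow 2).mul hψcont.continuousOn)
  have slice_int : ∀ (c : ℝ), c ∈ Icc (0:ℝ) T → ∀ {u : ℝ×ℝ → ℝ}, ContinuousOn u U →
      ∀ {e : ℝ → ℝ}, Continuous e → IntegrableOn (fun x => (u (x,c))^2 * e x) (Ioo (0:ℝ) a) := by
    intro c hc u hu e he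
    have h1 : ContinuousOn (fun x => u (x,c)) (Icc (0:ℝ) a) :=
      (hKsub hu).comp ((continuous_id.prodMk continuous_const).continuousOn)
        (fun x hx => mk_mem_prod hx hc)
    exact (((h1.pow 2).mul he.continuousOn).integrableOn_compact isCompact_Icc).mono_set
      Ioo_subset_Icc_self
  have h0T : (0:ℝ) ∈ Icc (0:ℝ) T := left_mem_Icc.2 hT.le
  have hTT : T ∈ Icc (0:ℝ) T := right_mem_Icc.2 hT.le
  have Tg := transport ha hT hα1 hα2 hlam0 hUo hKU hx_g ht_g hgc hgxc hgtc hg0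
  have Tw := transport ha hT hα1 hα2 hlam0 hUo hKU hx_w ht_w hwc hgc hwtc hw0
  rw [← hβdef] at Tg Tw
  have Hw : lam^2 * (∫ p in Ioo (0:ℝ) a ×ˢ Ioo (0:ℝ) T, (w p)^2 * Real.exp (-2*lam*(p.1+α*p.2)))
      ≤ ∫ p in Ioo (0:ℝ) a ×ˢ Ioo (0:ℝ) T, (g p)^2 * Real.exp (-2*lam*(p.1+α*p.2)) :=
    hardy2d ha hT hlam0 (fun p hp => hx_w p (hKU hp)) (hKsub hwc) (hKsub hgc) hw0
  have Hh : lam^2 * (∫ p in Ioo (0:ℝ) a ×ˢ Ioo (0:ℝ) T, (g p - 2*wt p)^2 * Real.exp (-2*lam*(p.1+α*p.2)))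
      ≤ ∫ p in Ioo (0:ℝ) a ×ˢ Ioo (0:ℝ) T, (gx p - 2*gt p)^2 * Real.exp (-2*lam*(p.1+α*p.2)) :=
    hardy2d ha hT hlam0 (fun p hp => hx_h p (hKU hp))
      ((hKsub hgc).sub (continuousOn_const.mul (hKsub hwtc)))
      ((hKsub hgxc).sub (continuousOn_const.mul (hKsub hgtc))) hh0
  rw [ge_iff_le]
  simp only [carlemanWeight]
  have EqL : (∫ p in Ioo (0:ℝ) a ×ˢ Ioo (0:ℝ) T,
        (partialX (partialX w) p - 2 * partialT (partialX w) p)^2 * Real.exp (-2*lam*(p.1+α*p.2)))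
      = ∫ p in Ioo (0:ℝ) a ×ˢ Ioo (0:ℝ) T, (gx p - 2*gt p)^2 * Real.exp (-2*lam*(p.1+α*p.2)) := by
    apply setIntegral_congr_fun hΩmeas
    intro p hp
    simp only [hpxx p (hΩU hp), hptx p (hΩU hp)]
  have EqA : (∫ p in Ioo (0:ℝ) a ×ˢ Ioo (0:ℝ) T,
        (lam * ((partialX w p)^2 + (partialT w p)^2) + lam^3 * (w p)^2) * Real.exp (-2*lam*(p.1+α*p.2)))
      = lam * (∫ p in Ioo (0:ℝ) a ×ˢ Ioo (0:ℝ) T, (g p)^2 * Real.exp (-2*lam*(p.1+α*p.2)))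
        + (lam * (∫ p in Ioo (0:ℝ) a ×ˢ Ioo (0:ℝ) T, (wt p)^2 * Real.exp (-2*lam*(p.1+α*p.2)))
        + lam^3 * (∫ p in Ioo (0:ℝ) a ×ˢ Ioo (0:ℝ) T, (w p)^2 * Real.exp (-2*lam*(p.1+α*p.2)))) := by
    have step1 : (∫ p in Ioo (0:ℝ) a ×ˢ Ioo (0:ℝ) T,
        (lam * ((partialX w p)^2 + (partialT w p)^2) + lam^3 * (w p)^2) * Real.exp (-2*lam*(p.1+α*p.2)))
        = ∫ p in Ioo (0:ℝ) a ×ˢ Ioo (0:ℝ) T,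
          (lam * ((g p)^2 * Real.exp (-2*lam*(p.1+α*p.2)))
            + (lam * ((wt p)^2 * Real.exp (-2*lam*(p.1+α*p.2)))
              + lam^3 * ((w p)^2 * Real.exp (-2*lam*(p.1+α*p.2))))) := by
      apply setIntegral_congr_fun hΩmeas
      intro p hp
      simp only [hpx p (hΩU hp), hpt p (hΩU hp)]
      ring
    have hI23 : IntegrableOn (fun p => lam * ((wt p)^2 * Real.exp (-2*lam*(p.1+α*p.2)))
        + lam^3 * ((w p)^2 * Real.exp (-2*lam*(p.1+α*p.2)))) (Ioo (0:ℝ) a ×ˢ Ioo (0:ℝ) T) :=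
      (hIwt.const_mul lam).add (hIw.const_mul (lam^3))
    rw [step1, integral_add (hIg.const_mul lam) hI23,
      integral_add (hIwt.const_mul lam) (hIw.const_mul (lam^3)),
      integral_const_mul, integral_const_mul, integral_const_mul]
  have EqB : (∫ x in Ioo (0:ℝ) a,
        (lam * (partialX w (x,0))^2 + lam^3 * (w (x,0))^2) * Real.exp (-2*lam*x))
      = lam * (∫ x in Ioo (0:ℝ) a, (g (x,0))^2 * Real.exp (-2*lam*x))
        + lam^3 * (∫ x in Ioo (0:ℝ) a, (w (x,0))^2 * Real.exp (-2*lam*x)) := by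
    have step1 : (∫ x in Ioo (0:ℝ) a,
        (lam * (partialX w (x,0))^2 + lam^3 * (w (x,0))^2) * Real.exp (-2*lam*x))
        = ∫ x in Ioo (0:ℝ) a, (lam * ((g (x,0))^2 * Real.exp (-2*lam*x))
            + lam^3 * ((w (x,0))^2 * Real.exp (-2*lam*x))) := by
      apply setIntegral_congr_fun measurableSet_Ioo
      intro x hx
      simp only [hpx (x,0) (hKU (mk_mem_prod (Ioo_subset_Icc_self hx) h0T))]
      ring
    rw [step1, integral_add ((slice_int 0 h0T hgc hψcont1).const_mul lam)
        ((slice_int 0 h0T hwc hψcont1).const_mul (lam^3)),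
      integral_const_mul, integral_const_mul]
  have EqT : (∫ x in Ioo (0:ℝ) a, (lam * (partialX w (x,T))^2 + lam^3 * (w (x,T))^2))
      = ∫ x in Ioo (0:ℝ) a, (lam * (g (x,T))^2 + lam^3 * (w (x,T))^2) := by
    apply setIntegral_congr_fun measurableSet_Ioo
    intro x hx
    simp only [hpx (x,T) (hKU (mk_mem_prod (Ioo_subset_Icc_self hx) hTT))]
  rw [EqL, EqA, EqB, EqT]
  -- nonnegativity
  have hL0 : 0 ≤ ∫ p in Ioo (0:ℝ) a ×ˢ Ioo (0:ℝ) T, (gx p - 2*gt p)^2 * Real.exp (-2*lam*(p.1+α*p.2)) :=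
    setIntegral_nonneg hΩmeas (fun p _ => by positivity)
  have hJg0 : 0 ≤ ∫ p in Ioo (0:ℝ) a ×ˢ Ioo (0:ℝ) T, (g p)^2 * Real.exp (-2*lam*(p.1+α*p.2)) :=
    setIntegral_nonneg hΩmeas (fun p _ => by positivity)
  have hJh0 : 0 ≤ ∫ p in Ioo (0:ℝ) a ×ˢ Ioo (0:ℝ) T, (g p - 2*wt p)^2 * Real.exp (-2*lam*(p.1+α*p.2)) :=
    setIntegral_nonneg hΩmeas (fun p _ => by positivity)
  have hJw0 : 0 ≤ ∫ p in Ioo (0:ℝ) a ×ˢ Ioo (0:ℝ) T, (w p)^2 * Real.exp (-2*lam*(p.1+α*p.2)) :=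
    setIntegral_nonneg hΩmeas (fun p _ => by positivity)
  -- M8 : T-boundary comparison
  have hψTc : Continuous (fun x : ℝ => Real.exp (-2*lam*(x+α*T))) := by fun_prop
  have hgT1 : ContinuousOn (fun x => g (x,T)) (Icc (0:ℝ) a) :=
    (hKsub hgc).comp ((continuous_id.prodMk continuous_const).continuousOn)
      (fun x hx => mk_mem_prod hx hTT)
  have hwT1 : ContinuousOn (fun x => w (x,T)) (Icc (0:ℝ) a) :=
    (hKsub hwc).comp ((continuous_id.prodMk continuous_const).continuousOn)
      (fun x hx => mk_mem_prod hx hTT)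
  have hIgT := slice_int T hTT hgc hψTc
  have hIwT := slice_int T hTT hwc hψTc
  have hIDT : IntegrableOn (fun x => lam * (g (x,T))^2 + lam^3 * (w (x,T))^2) (Ioo (0:ℝ) a) :=
    (((continuousOn_const.mul (hgT1.pow 2)).add
      (continuousOn_const.mul (hwT1.pow 2))).integrableOn_compact isCompact_Icc).mono_set
      Ioo_subset_Icc_self
  have M8 : lam * (∫ x in Ioo (0:ℝ) a, (g (x,T))^2 * Real.exp (-2*lam*(x+α*T)))
      + lam^3 * (∫ x in Ioo (0:ℝ) a, (w (x,T))^2 * Real.exp (-2*lam*(x+α*T)))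
      ≤ Real.exp (-2*lam*α*T) * (∫ x in Ioo (0:ℝ) a, (lam * (g (x,T))^2 + lam^3 * (w (x,T))^2)) := by
    have e1 : (∫ x in Ioo (0:ℝ) a, (lam * ((g (x,T))^2 * Real.exp (-2*lam*(x+α*T)))
          + lam^3 * ((w (x,T))^2 * Real.exp (-2*lam*(x+α*T)))))
        = lam * (∫ x in Ioo (0:ℝ) a, (g (x,T))^2 * Real.exp (-2*lam*(x+α*T)))
          + lam^3 * (∫ x in Ioo (0:ℝ) a, (w (x,T))^2 * Real.exp (-2*lam*(x+α*T))) := by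
      rw [integral_add (hIgT.const_mul lam) (hIwT.const_mul (lam^3)),
        integral_const_mul, integral_const_mul]
    have e2 : Real.exp (-2*lam*α*T) * (∫ x in Ioo (0:ℝ) a, (lam * (g (x,T))^2 + lam^3 * (w (x,T))^2))
        = ∫ x in Ioo (0:ℝ) a, Real.exp (-2*lam*α*T) * (lam * (g (x,T))^2 + lam^3 * (w (x,T))^2) :=
      (integral_const_mul _ _).symm
    rw [← e1, e2]
    apply setIntegral_mono_on ((hIgT.const_mul lam).add (hIwT.const_mul (lam^3)))
      (hIDT.const_mul _) measurableSet_Ioo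
    intro x hx
    simp only [Pi.add_apply]
    have hle : Real.exp (-2*lam*(x+α*T)) ≤ Real.exp (-2*lam*α*T) := by
      apply Real.exp_le_exp.2
      nlinarith [hx.1, hlam0]
    have h1 : (lam * (g (x,T))^2) * Real.exp (-2*lam*(x+α*T))
        ≤ (lam * (g (x,T))^2) * Real.exp (-2*lam*α*T) :=
      mul_le_mul_of_nonneg_left hle (by positivity)
    have h2 : (lam^3 * (w (x,T))^2) * Real.exp (-2*lam*(x+α*T))
        ≤ (lam^3 * (w (x,T))^2) * Real.exp (-2*lam*α*T) :=
      mul_le_mul_of_nonneg_left hle (by positivity)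
    nlinarith [h1, h2]
  -- M1
  have M1 : lam * (∫ x in Ioo (0:ℝ) a, (g (x,0))^2 * Real.exp (-2*lam*x))
      + (lam^2*β/2) * (∫ p in Ioo (0:ℝ) a ×ˢ Ioo (0:ℝ) T, (g p)^2 * Real.exp (-2*lam*(p.1+α*p.2)))
      ≤ lam * (∫ x in Ioo (0:ℝ) a, (g (x,T))^2 * Real.exp (-2*lam*(x+α*T)))
        + (1/2) * (1/β) * (∫ p in Ioo (0:ℝ) a ×ˢ Ioo (0:ℝ) T, (gx p - 2*gt p)^2 * Real.exp (-2*lam*(p.1+α*p.2))) := by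
    have h2 := mul_le_mul_of_nonneg_left Tg hlam0.le
    have e1 : lam*((∫ x in Ioo (0:ℝ) a, (g (x,0))^2 * Real.exp (-2*lam*x))
        + (lam*β/2) * (∫ p in Ioo (0:ℝ) a ×ˢ Ioo (0:ℝ) T, (g p)^2 * Real.exp (-2*lam*(p.1+α*p.2))))
        = lam * (∫ x in Ioo (0:ℝ) a, (g (x,0))^2 * Real.exp (-2*lam*x))
          + (lam^2*β/2) * (∫ p in Ioo (0:ℝ) a ×ˢ Ioo (0:ℝ) T, (g p)^2 * Real.exp (-2*lam*(p.1+α*p.2))) := by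
      ring
    have e2 : lam*((∫ x in Ioo (0:ℝ) a, (g (x,T))^2 * Real.exp (-2*lam*(x+α*T)))
        + (1/(2*lam*β)) * (∫ p in Ioo (0:ℝ) a ×ˢ Ioo (0:ℝ) T, (gx p - 2*gt p)^2 * Real.exp (-2*lam*(p.1+α*p.2))))
        = lam * (∫ x in Ioo (0:ℝ) a, (g (x,T))^2 * Real.exp (-2*lam*(x+α*T)))
          + (1/2) * (1/β) * (∫ p in Ioo (0:ℝ) a ×ˢ Ioo (0:ℝ) T, (gx p - 2*gt p)^2 * Real.exp (-2*lam*(p.1+α*p.2))) := by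
      field_simp
    rw [e1, e2] at h2
    exact h2
  -- M2
  have M2 : lam^3 * (∫ x in Ioo (0:ℝ) a, (w (x,0))^2 * Real.exp (-2*lam*x))
      ≤ lam^3 * (∫ x in Ioo (0:ℝ) a, (w (x,T))^2 * Real.exp (-2*lam*(x+α*T)))
        + (1/2) * (1/β) * (∫ p in Ioo (0:ℝ) a ×ˢ Ioo (0:ℝ) T, (gx p - 2*gt p)^2 * Real.exp (-2*lam*(p.1+α*p.2))) := by
    have h2 := mul_le_mul_of_nonneg_left Tw (by positivity : (0:ℝ) ≤ lam^3)
    have e2 : lam^3*((∫ x in Ioo (0:ℝ) a, (w (x,T))^2 * Real.exp (-2*lam*(x+α*T)))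
        + (1/(2*lam*β)) * (∫ p in Ioo (0:ℝ) a ×ˢ Ioo (0:ℝ) T, (g p - 2*wt p)^2 * Real.exp (-2*lam*(p.1+α*p.2))))
        = lam^3 * (∫ x in Ioo (0:ℝ) a, (w (x,T))^2 * Real.exp (-2*lam*(x+α*T)))
          + (1/2) * (1/β) * (lam^2 * (∫ p in Ioo (0:ℝ) a ×ˢ Ioo (0:ℝ) T, (g p - 2*wt p)^2 * Real.exp (-2*lam*(p.1+α*p.2)))) := by
      field_simp
    rw [e2] at h2
    have h3 : (1/2) * (1/β) * (lam^2 * (∫ p in Ioo (0:ℝ) a ×ˢ Ioo (0:ℝ) T, (g p - 2*wt p)^2 * Real.exp (-2*lam*(p.1+α*p.2))))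
        ≤ (1/2) * (1/β) * (∫ p in Ioo (0:ℝ) a ×ˢ Ioo (0:ℝ) T, (gx p - 2*gt p)^2 * Real.exp (-2*lam*(p.1+α*p.2))) :=
      mul_le_mul_of_nonneg_left Hh (by positivity)
    have h4 : 0 ≤ lam^3 * ((lam*β/2) * (∫ p in Ioo (0:ℝ) a ×ˢ Ioo (0:ℝ) T, (w p)^2 * Real.exp (-2*lam*(p.1+α*p.2)))) := by
      apply mul_nonneg (by positivity)
      exact mul_nonneg (by positivity) hJw0
    nlinarith [h2, h3, h4]
  -- M4 : lam * Jh ≤ L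
  have M4 : lam * (∫ p in Ioo (0:ℝ) a ×ˢ Ioo (0:ℝ) T, (g p - 2*wt p)^2 * Real.exp (-2*lam*(p.1+α*p.2)))
      ≤ ∫ p in Ioo (0:ℝ) a ×ˢ Ioo (0:ℝ) T, (gx p - 2*gt p)^2 * Real.exp (-2*lam*(p.1+α*p.2)) := by
    have h1 : 0 ≤ (lam^2 - lam) * (∫ p in Ioo (0:ℝ) a ×ˢ Ioo (0:ℝ) T, (g p - 2*wt p)^2 * Real.exp (-2*lam*(p.1+α*p.2))) :=
      mul_nonneg (by nlinarith) hJh0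
    nlinarith [Hh]
  -- M5 : lam^3 * Jw ≤ lam * Jg
  have M5 : lam^3 * (∫ p in Ioo (0:ℝ) a ×ˢ Ioo (0:ℝ) T, (w p)^2 * Real.exp (-2*lam*(p.1+α*p.2)))
      ≤ lam * (∫ p in Ioo (0:ℝ) a ×ˢ Ioo (0:ℝ) T, (g p)^2 * Real.exp (-2*lam*(p.1+α*p.2))) := by
    have h2 := mul_le_mul_of_nonneg_left Hw hlam0.le
    nlinarith [h2]
  -- M3
  have M3 : (5/2) * (lam * (∫ p in Ioo (0:ℝ) a ×ˢ Ioo (0:ℝ) T, (g p)^2 * Real.exp (-2*lam*(p.1+α*p.2))))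
      ≤ (lam^2*β/2) * (∫ p in Ioo (0:ℝ) a ×ˢ Ioo (0:ℝ) T, (g p)^2 * Real.exp (-2*lam*(p.1+α*p.2))) := by
    have h1 : 0 ≤ (lam*(lam*β - 5)/2) * (∫ p in Ioo (0:ℝ) a ×ˢ Ioo (0:ℝ) T, (g p)^2 * Real.exp (-2*lam*(p.1+α*p.2))) :=
      mul_nonneg (by nlinarith) hJg0
    nlinarith [h1]
  -- M7 : lam * Jwt ≤ (1/2) lam Jg + (1/2) lam Jh
  have M7 : (∫ p in Ioo (0:ℝ) a ×ˢ Ioo (0:ℝ) T, (wt p)^2 * Real.exp (-2*lam*(p.1+α*p.2)))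
      ≤ (1/2) * (∫ p in Ioo (0:ℝ) a ×ˢ Ioo (0:ℝ) T, (g p)^2 * Real.exp (-2*lam*(p.1+α*p.2)))
        + (1/2) * (∫ p in Ioo (0:ℝ) a ×ˢ Ioo (0:ℝ) T, (g p - 2*wt p)^2 * Real.exp (-2*lam*(p.1+α*p.2))) := by
    have e1 : (∫ p in Ioo (0:ℝ) a ×ˢ Ioo (0:ℝ) T,
          ((1/2) * ((g p)^2 * Real.exp (-2*lam*(p.1+α*p.2)))
            + (1/2) * ((g p - 2*wt p)^2 * Real.exp (-2*lam*(p.1+α*p.2)))))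
        = (1/2) * (∫ p in Ioo (0:ℝ) a ×ˢ Ioo (0:ℝ) T, (g p)^2 * Real.exp (-2*lam*(p.1+α*p.2)))
          + (1/2) * (∫ p in Ioo (0:ℝ) a ×ˢ Ioo (0:ℝ) T, (g p - 2*wt p)^2 * Real.exp (-2*lam*(p.1+α*p.2))) := by
      rw [integral_add (hIg.const_mul (1/2)) (hIh.const_mul (1/2)),
        integral_const_mul, integral_const_mul]
    rw [← e1]
    apply setIntegral_mono_on hIwt ((hIg.const_mul (1/2)).add (hIh.const_mul (1/2))) hΩmeas
    intro p _
    have hψ0 : (0:ℝ) ≤ Real.exp (-2*lam*(p.1+α*p.2)) := (Real.exp_pos _).le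
    have key : (wt p)^2 ≤ (1/2) * (g p)^2 + (1/2) * (g p - 2*wt p)^2 := by
      nlinarith [sq_nonneg (g p - wt p)]
    calc (wt p)^2 * Real.exp (-2*lam*(p.1+α*p.2))
        ≤ ((1/2) * (g p)^2 + (1/2) * (g p - 2*wt p)^2) * Real.exp (-2*lam*(p.1+α*p.2)) :=
          mul_le_mul_of_nonneg_right key hψ0
      _ = (1/2) * ((g p)^2 * Real.exp (-2*lam*(p.1+α*p.2)))
          + (1/2) * ((g p - 2*wt p)^2 * Real.exp (-2*lam*(p.1+α*p.2))) := by ring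
  have M7l := mul_le_mul_of_nonneg_left M7 hlam0.le
  -- assemble
  have hSum : lam * (∫ p in Ioo (0:ℝ) a ×ˢ Ioo (0:ℝ) T, (g p)^2 * Real.exp (-2*lam*(p.1+α*p.2)))
      + (lam * (∫ p in Ioo (0:ℝ) a ×ˢ Ioo (0:ℝ) T, (wt p)^2 * Real.exp (-2*lam*(p.1+α*p.2)))
        + lam^3 * (∫ p in Ioo (0:ℝ) a ×ˢ Ioo (0:ℝ) T, (w p)^2 * Real.exp (-2*lam*(p.1+α*p.2))))
      + (lam * (∫ x in Ioo (0:ℝ) a, (g (x,0))^2 * Real.exp (-2*lam*x))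
        + lam^3 * (∫ x in Ioo (0:ℝ) a, (w (x,0))^2 * Real.exp (-2*lam*x)))
      ≤ Real.exp (-2*lam*α*T) * (∫ x in Ioo (0:ℝ) a, (lam * (g (x,T))^2 + lam^3 * (w (x,T))^2))
        + (1/β + 1/2) * (∫ p in Ioo (0:ℝ) a ×ˢ Ioo (0:ℝ) T, (gx p - 2*gt p)^2 * Real.exp (-2*lam*(p.1+α*p.2))) := by
    nlinarith [M1, M2, M3, M4, M5, M7l, M8]
  have hCs : C * (1/β + 1/2) ≤ 1 := by
    rw [hCdef]
    rw [div_mul_eq_mul_div, div_le_one (by positivity)]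
    have e3 : β * (1/β + 1/2) = 1 + β/2 := by
      field_simp
    rw [e3]
    linarith
  have hmul := mul_le_mul_of_nonneg_left hSum hC0.le
  have hfin := mul_le_mul_of_nonneg_right hCs hL0
  nlinarith [hmul, hfin]
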